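/- For coprime natural numbers d, q, the limit lim_{z→1⁺} (z−1)·∑_{n ≡ d (mod q), n ≥ 1} 1/n^z exists and equals 1/q. -/

import Mathlib

open Filter Topology

private lemma summable_prog (a b : ℕ) (ha : 0 < a) {z : ℝ} (hz : 1 < z) :
    Summable fun k : ℕ => ((a * k + b : ℕ) : ℝ) ^ (-z) := by
  have hbase : Summable fun n : ℕ => (n : ℝ) ^ (-z) :=
    Real.summable_nat_rpow.mpr (by linarith)
  have hinj : Function.Injective fun k : ℕ => a * k + b := by
    intro k₁ k₂ h
    simp only at h
    exact Nat.eq_of_mul_eq_mul_left ha (by omega)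
  exact hbase.comp_injective hinj

/-- The arithmetic progression `{n ≥ 1 : n ≡ d (mod q)}` with `gcd(d,q) = 1` has
Dedekind–Dirichlet density `1/q`. -/
theorem progression_dedekind_dirichlet_density
    (q d : ℕ) (hq : 0 < q) (hd : Nat.Coprime d q) :
    Tendsto
      (fun z : ℝ => (z - 1) *
        ∑' n : {n : ℕ // 1 ≤ n ∧ n ≡ d [MOD q]}, ((n : ℕ) : ℝ) ^ (-z))
      (𝓝[>] (1 : ℝ)) (𝓝 (1 / (q : ℝ))) := by
  classical
  -- the least positive representative of the residue class
  set r : ℕ := if q = 1 then 1 else d % q with hr_def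
  have hr1 : 1 ≤ r := by
    rcases eq_or_ne q 1 with h | h
    · simp [hr_def, h]
    · simp only [hr_def, if_neg h]
      rcases Nat.eq_zero_or_pos (d % q) with h0 | h0
      · exfalso
        have hdvd : q ∣ d := Nat.dvd_of_mod_eq_zero h0
        exact h (Nat.eq_one_of_dvd_coprimes hd hdvd dvd_rfl)
      · exact h0
  have hrq : r ≤ q := by
    rcases eq_or_ne q 1 with h | h
    · simp [hr_def, h]
    · simp only [hr_def, if_neg h]
      exact (Nat.mod_lt d hq).le
  have hrd : r ≡ d [MOD q] := by
    rcases eq_or_ne q 1 with h | h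
    · subst h; exact Nat.modEq_one
    · simp only [hr_def, if_neg h]
      exact Nat.mod_modEq d q
  -- bijection between ℕ and the progression
  have hmem : ∀ k : ℕ, 1 ≤ q * k + r ∧ q * k + r ≡ d [MOD q] := by
    intro k
    refine ⟨by omega, ?_⟩
    calc q * k + r ≡ r [MOD q] := by
          unfold Nat.ModEq
          rw [Nat.mul_comm q k, Nat.add_comm, Nat.add_mul_mod_self_right]
      _ ≡ d [MOD q] := hrd
  let e : ℕ → {n : ℕ // 1 ≤ n ∧ n ≡ d [MOD q]} := fun k => ⟨q * k + r, hmem k⟩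
  have hbij : Function.Bijective e := by
    constructor
    · intro k₁ k₂ h
      have : q * k₁ + r = q * k₂ + r := congrArg Subtype.val h
      exact Nat.eq_of_mul_eq_mul_left hq (by omega)
    · rintro ⟨n, hn1, hn2⟩
      have hnr : n ≡ r [MOD q] := hn2.trans hrd.symm
      have hrn : r ≤ n := by
        rcases eq_or_ne q 1 with h | h
        · simp only [hr_def, if_pos h]; exact hn1
        · by_contra hlt
          push_neg at hlt
          have hrltq : r < q := by
            simp only [hr_def, if_neg h]; exact Nat.mod_lt d hq
          have h1 : n % q = n := Nat.mod_eq_of_lt (by omega)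
          have h2 : r % q = r := Nat.mod_eq_of_lt hrltq
          have := hnr
          unfold Nat.ModEq at this
          omega
      have hdvd : q ∣ n - r := (Nat.modEq_iff_dvd' hrn).mp hnr.symm
      obtain ⟨c, hc⟩ := hdvd
      refine ⟨c, ?_⟩
      simp only [e, Subtype.mk.injEq]
      omega
  have htsum_eq : ∀ z : ℝ,
      (∑' n : {n : ℕ // 1 ≤ n ∧ n ≡ d [MOD q]}, ((n : ℕ) : ℝ) ^ (-z))
        = ∑' k : ℕ, ((q * k + r : ℕ) : ℝ) ^ (-z) := by
    intro z
    exact ((Equiv.ofBijective e hbij).tsum_eq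
      (fun n : {n : ℕ // 1 ≤ n ∧ n ≡ d [MOD q]} => ((n : ℕ) : ℝ) ^ (-z))).symm
  simp only [htsum_eq]
  -- zeta expressed with rpow
  have hzeta : Tendsto (fun z : ℝ => (z - 1) * ∑' n : ℕ, (n : ℝ) ^ (-z))
      (𝓝[>] (1 : ℝ)) (𝓝 1) := by
    apply tendsto_sub_mul_tsum_nat_rpow.congr'
    filter_upwards [self_mem_nhdsWithin] with z hz
    congr 1
    apply tsum_congr
    intro n
    rw [Real.rpow_neg (Nat.cast_nonneg n), one_div]
  have hqpos : (0 : ℝ) < q := Nat.cast_pos.mpr hq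
  have hrpos : (0 : ℝ) < r := Nat.cast_pos.mpr hr1
  -- continuous factors
  have hqz : Tendsto (fun z : ℝ => (q : ℝ) ^ (-z)) (𝓝[>] (1 : ℝ)) (𝓝 ((q : ℝ)⁻¹)) := by
    have : ContinuousAt (fun z : ℝ => (q : ℝ) ^ (-z)) 1 :=
      (Real.continuousAt_const_rpow hqpos.ne').comp (continuousAt_id.neg)
    have h1 : (q : ℝ) ^ (-(1 : ℝ)) = (q : ℝ)⁻¹ := Real.rpow_neg_one _
    exact h1 ▸ this.continuousWithinAt.tendsto
  have hrz : Tendsto (fun z : ℝ => (r : ℝ) ^ (-z)) (𝓝[>] (1 : ℝ)) (𝓝 ((r : ℝ)⁻¹)) := by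
    have : ContinuousAt (fun z : ℝ => (r : ℝ) ^ (-z)) 1 :=
      (Real.continuousAt_const_rpow hrpos.ne').comp (continuousAt_id.neg)
    have h1 : (r : ℝ) ^ (-(1 : ℝ)) = (r : ℝ)⁻¹ := Real.rpow_neg_one _
    exact h1 ▸ this.continuousWithinAt.tendsto
  have hz1 : Tendsto (fun z : ℝ => z - 1) (𝓝[>] (1 : ℝ)) (𝓝 0) := by
    have h : Tendsto (fun z : ℝ => z - 1) (𝓝 (1 : ℝ)) (𝓝 (1 - 1)) :=
      (continuous_id.sub continuous_const).tendsto 1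
    rw [sub_self] at h
    exact h.mono_left nhdsWithin_le_nhds
  -- lower bound tends to 1/q
  have hlow : Tendsto (fun z : ℝ => (q : ℝ) ^ (-z) * ((z - 1) * ∑' n : ℕ, (n : ℝ) ^ (-z)))
      (𝓝[>] (1 : ℝ)) (𝓝 (1 / (q : ℝ))) := by
    have := hqz.mul hzeta
    simpa [one_div] using this
  -- upper bound tends to 1/q
  have hupp : Tendsto (fun z : ℝ =>
      (z - 1) * (r : ℝ) ^ (-z) + (q : ℝ) ^ (-z) * ((z - 1) * ∑' n : ℕ, (n : ℝ) ^ (-z)))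
      (𝓝[>] (1 : ℝ)) (𝓝 (1 / (q : ℝ))) := by
    have h0 : Tendsto (fun z : ℝ => (z - 1) * (r : ℝ) ^ (-z)) (𝓝[>] (1 : ℝ)) (𝓝 0) := by
      have := hz1.mul hrz
      simpa using this
    have := h0.add hlow
    simpa using this
  -- key decomposition for z > 1
  have hkey : ∀ z : ℝ, 1 < z →
      (q : ℝ) ^ (-z) * ((z - 1) * ∑' n : ℕ, (n : ℝ) ^ (-z))
        ≤ (z - 1) * ∑' k : ℕ, ((q * k + r : ℕ) : ℝ) ^ (-z) ∧
      (z - 1) * ∑' k : ℕ, ((q * k + r : ℕ) : ℝ) ^ (-z)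
        ≤ (z - 1) * (r : ℝ) ^ (-z)
          + (q : ℝ) ^ (-z) * ((z - 1) * ∑' n : ℕ, (n : ℝ) ^ (-z)) := by
    intro z hz
    have hz0 : (0 : ℝ) ≤ z - 1 := by linarith
    have hbase : Summable fun n : ℕ => (n : ℝ) ^ (-z) :=
      Real.summable_nat_rpow.mpr (by linarith)
    have hS1 : Summable fun k : ℕ => ((q * k + r : ℕ) : ℝ) ^ (-z) :=
      summable_prog q r hq hz
    have hS2 : Summable fun k : ℕ => ((q * (k + 1) : ℕ) : ℝ) ^ (-z) :=
      summable_prog q q hq hz |>.congr (fun k => by ring_nf)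
    have hS3 : Summable fun k : ℕ => ((q * (k + 1) + r : ℕ) : ℝ) ^ (-z) :=
      summable_prog q (q + r) hq hz |>.congr (fun k => by ring_nf)
    -- q^{-z} * ζ(z) = ∑ (q(k+1))^{-z}
    have hsplit : (q : ℝ) ^ (-z) * ∑' n : ℕ, (n : ℝ) ^ (-z)
        = ∑' k : ℕ, ((q * (k + 1) : ℕ) : ℝ) ^ (-z) := by
      rw [Summable.tsum_eq_zero_add hbase]
      have h00 : ((0 : ℕ) : ℝ) ^ (-z) = 0 := by
        rw [Nat.cast_zero, Real.zero_rpow (by linarith)]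
      rw [h00, zero_add, ← tsum_mul_left]
      apply tsum_congr
      intro k
      rw [← Real.mul_rpow (le_of_lt hqpos) (by positivity)]
      push_cast
      ring_nf
    have hsplit' : (q : ℝ) ^ (-z) * ((z - 1) * ∑' n : ℕ, (n : ℝ) ^ (-z))
        = (z - 1) * ∑' k : ℕ, ((q * (k + 1) : ℕ) : ℝ) ^ (-z) := by
      rw [← hsplit]; ring
    constructor
    · -- lower bound
      rw [hsplit']
      apply mul_le_mul_of_nonneg_left _ hz0
      apply Summable.tsum_le_tsum _ hS2 hS1
      intro k
      apply Real.rpow_le_rpow_of_nonpos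
      · positivity
      · push_cast; nlinarith [(Nat.cast_le.mpr hrq : (r:ℝ) ≤ (q:ℝ)), (Nat.cast_nonneg k : (0:ℝ) ≤ k)]
      · linarith
    · -- upper bound
      rw [hsplit', Summable.tsum_eq_zero_add hS1, mul_add]
      have h0 : ((q * 0 + r : ℕ) : ℝ) ^ (-z) = (r : ℝ) ^ (-z) := by norm_num
      rw [h0]
      apply add_le_add_right
      apply mul_le_mul_of_nonneg_left _ hz0
      apply Summable.tsum_le_tsum _ hS3 hS2
      intro k
      apply Real.rpow_le_rpow_of_nonpos
      · positivity
      · push_cast; nlinarith [(Nat.cast_nonneg r : (0:ℝ) ≤ r)]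
      · linarith
  refine tendsto_of_tendsto_of_tendsto_of_le_of_le' hlow hupp ?_ ?_
  · filter_upwards [self_mem_nhdsWithin] with z hz
    exact (hkey z hz).1
  · filter_upwards [self_mem_nhdsWithin] with z hz
    exact (hkey z hz).2
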